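/- In any generalized grid graph, the shortest-path cost c from (0,0) satisfies, for every vertex (i,d): (1) 0 ≤ c(i,d) − c(i−1,d) ≤ 1 whenever (i−1,d) is a reachable vertex of the graph; (2) −1 ≤ c(i,d) − c(i,d−1) ≤ 1 whenever (i,d−1) is a reachable vertex of the graph; (3) −1 ≤ c(i,d) − c(i−1,d+1) ≤ 1 whenever (i−1,d+1) is a reachable vertex of the graph. -/

import Mathlib

namespace Stmt1

/-- Total weight of a list of vertices regarded as a walk. -/
def pathCost {V : Type*} (wt : V → V → ℕ) : List V → ℕ
  | [] => 0
  | [_] => 0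
  | a :: b :: l => wt a b + pathCost wt (b :: l)

/-- `l` is a directed path (walk) from `s` to `v` in the graph with edge relation `E`. -/
def IsPath {V : Type*} (E : V → V → Prop) (s v : V) (l : List V) : Prop :=
  l.head? = some s ∧ l.getLast? = some v ∧ l.Chain' E

/-- Shortest-path cost from `s` to `v`. -/
noncomputable def cost {V : Type*} (E : V → V → Prop) (wt : V → V → ℕ) (s v : V) : ℕ :=
  sInf { c | ∃ l : List V, IsPath E s v l ∧ pathCost wt l = c }

/-- Vertices of a generalized grid graph with rows `[0..N]` and diagonals `[-t..t]`. -/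
def ggVertex (N t : ℕ) (v : ℤ × ℤ) : Prop :=
  0 ≤ v.1 ∧ v.1 ≤ (N : ℤ) ∧ -(t : ℤ) ≤ v.2 ∧ v.2 ≤ (t : ℤ)

/-- Edges of a generalized grid graph: deletion edges `(i,d) → (i+1,d-1)`,
insertion edges `(i,d) → (i,d+1)`, vertical edges `(i,d) → (i+1,d)`;
present only when both endpoints are vertices. -/
def ggEdge (N t : ℕ) (u v : ℤ × ℤ) : Prop :=
  ggVertex N t u ∧ ggVertex N t v ∧
    (v = (u.1 + 1, u.2 - 1) ∨ v = (u.1, u.2 + 1) ∨ v = (u.1 + 1, u.2))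

/-- Weights: a vertical edge `(i,d) → (i+1,d)` has weight `w (i+1) d`;
deletion and insertion edges have weight `1`. -/
def ggWt (w : ℤ → ℤ → ℕ) (u v : ℤ × ℤ) : ℕ :=
  if v = (u.1 + 1, u.2) then w v.1 v.2 else 1

/-- A vertex `(i,d)` is reachable if `i + d ≥ 0`. -/
def Reachable (N t : ℕ) (v : ℤ × ℤ) : Prop := ggVertex N t v ∧ 0 ≤ v.1 + v.2

/-- Shortest-path cost `c(i,d)` from `(0,0)` in the generalized grid graph. -/
noncomputable def ggCost (N t : ℕ) (w : ℤ → ℤ → ℕ) (v : ℤ × ℤ) : ℕ :=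
  cost (ggEdge N t) (ggWt w) (0, 0) v

/-- `(i,d)` is dominated by `(i,d-1)`. -/
def DomL (N t : ℕ) (w : ℤ → ℤ → ℕ) (v : ℤ × ℤ) : Prop :=
  Reachable N t v ∧ Reachable N t (v.1, v.2 - 1) ∧
    ggCost N t w (v.1, v.2 - 1) + 1 = ggCost N t w v

/-- `(i,d)` is dominated by `(i-1,d+1)`. -/
def DomU (N t : ℕ) (w : ℤ → ℤ → ℕ) (v : ℤ × ℤ) : Prop :=
  Reachable N t v ∧ Reachable N t (v.1 - 1, v.2 + 1) ∧
    ggCost N t w (v.1 - 1, v.2 + 1) + 1 = ggCost N t w v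

/-- Potency, defined by (well-founded, hence unambiguous) recursion in
lexicographic order: `(i,d)` is potent iff (dominated by `(i,d-1)` implies
`(i,d-1)` potent and `w (i+1) (d-1) = 1`) and (dominated by `(i-1,d+1)` implies
`(i-1,d+1)` potent and `w i (d+1) = 1`). -/
inductive Potent (N t : ℕ) (w : ℤ → ℤ → ℕ) : ℤ × ℤ → Prop where
  | mk : ∀ v : ℤ × ℤ,
      (DomL N t w v → Potent N t w (v.1, v.2 - 1)) →
      (DomL N t w v → w (v.1 + 1) (v.2 - 1) = 1) →
      (DomU N t w v → Potent N t w (v.1 - 1, v.2 + 1)) →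
      (DomU N t w v → w v.1 (v.2 + 1) = 1) →
      Potent N t w v

section Aux
variable {V : Type*} {E : V → V → Prop} {wt : V → V → ℕ} {s : V}

lemma chain_lower (φ : V → ℕ) (P : V → Prop)
    (hP : ∀ u v, P u → E u v → P v)
    (hL : ∀ u v, P u → E u v → φ v ≤ φ u + wt u v) :
    ∀ l : List V, l.Chain' E → ∀ a v, l.head? = some a → l.getLast? = some v →
      P a → φ v ≤ φ a + pathCost wt l
  | [], _, a, v, ha, _, _ => by simp at ha
  | [x], _, a, v, ha, hv, _ => by
      simp only [List.head?_cons, Option.some.injEq] at ha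
      simp only [List.getLast?_singleton, Option.some.injEq] at hv
      subst ha; subst hv; simp [pathCost]
  | x :: y :: l, hc, a, v, ha, hv, hPa => by
      simp only [List.head?_cons, Option.some.injEq] at ha
      subst ha
      rw [List.getLast?_cons_cons] at hv
      simp only [List.Chain', List.isChain_cons_cons] at hc
      have h1 := chain_lower φ P hP hL (y :: l) hc.2 y v rfl hv (hP _ _ hPa hc.1)
      have h2 := hL _ _ hPa hc.1
      simp only [pathCost]
      omega

lemma cost_lower (φ : V → ℕ) (P : V → Prop) (hs : φ s = 0) (hPs : P s)
    (hP : ∀ u v, P u → E u v → P v)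
    (hL : ∀ u v, P u → E u v → φ v ≤ φ u + wt u v)
    (v : V) (hne : ∃ l, IsPath E s v l) : φ v ≤ cost E wt s v := by
  obtain ⟨l, hl⟩ := hne
  have hmem := Nat.sInf_mem (s := {c | ∃ l : List V, IsPath E s v l ∧ pathCost wt l = c})
    ⟨_, l, hl, rfl⟩
  obtain ⟨l', hl', hc⟩ := hmem
  obtain ⟨h1, h2, h3⟩ := hl'
  have := chain_lower φ P hP hL l' h3 s v h1 h2 hPs
  rw [hs] at this
  calc φ v ≤ pathCost wt l' := by omega
    _ = cost E wt s v := hc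

lemma cost_le_path {v : V} {l : List V} (h : IsPath E s v l) :
    cost E wt s v ≤ pathCost wt l := Nat.sInf_le ⟨l, h, rfl⟩

lemma pathCost_snoc : ∀ (l : List V) (u v : V), l.getLast? = some u →
    pathCost wt (l ++ [v]) = pathCost wt l + wt u v
  | [], u, v, h => by simp at h
  | [x], u, v, h => by
      simp only [List.getLast?_singleton, Option.some.injEq] at h
      subst h; simp [pathCost]
  | x :: y :: l, u, v, h => by
      rw [List.getLast?_cons_cons] at h
      have ih := pathCost_snoc (y :: l) u v h
      simp only [List.cons_append] at ih ⊢
      simp only [pathCost]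
      omega

lemma isPath_snoc {u v : V} {l : List V} (h : IsPath E s u l) (he : E u v) :
    IsPath E s v (l ++ [v]) := by
  obtain ⟨h1, h2, h3⟩ := h
  refine ⟨?_, ?_, ?_⟩
  · cases l with
    | nil => simp at h1
    | cons a l => simpa using h1
  · simp
  · show List.IsChain E (l ++ [v])
    rw [List.isChain_append]
    refine ⟨h3, List.isChain_singleton v, ?_⟩
    intro x hx y hy
    simp only [List.head?_cons, Option.mem_def, Option.some.injEq] at hy
    rw [Option.mem_def, h2] at hx
    cases hx; cases hy; exact he

lemma cost_le_of_edge {u v : V} (hne : ∃ l, IsPath E s u l) (he : E u v) :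
    cost E wt s v ≤ cost E wt s u + wt u v := by
  obtain ⟨l, hl⟩ := hne
  have hmem := Nat.sInf_mem (s := {c | ∃ l : List V, IsPath E s u l ∧ pathCost wt l = c})
    ⟨_, l, hl, rfl⟩
  obtain ⟨l', hl', hc⟩ := hmem
  have hc' : pathCost wt l' = cost E wt s u := hc
  have hp := isPath_snoc hl' he
  have hcost := pathCost_snoc (wt := wt) l' u v hl'.2.1
  calc cost E wt s v ≤ pathCost wt (l' ++ [v]) := cost_le_path hp
    _ = pathCost wt l' + wt u v := hcost
    _ = cost E wt s u + wt u v := by rw [hc']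

end Aux

section Grid
variable {N t : ℕ} {w : ℤ → ℤ → ℕ}

lemma reachable_of_edge {u v : ℤ × ℤ} (he : ggEdge N t u v) (hu : Reachable N t u) :
    Reachable N t v := by
  obtain ⟨_, hv, h⟩ := he
  refine ⟨hv, ?_⟩
  obtain ⟨_, hs⟩ := hu
  rcases h with h | h | h <;> subst h <;> simp only [Prod.fst, Prod.snd] <;> omega

lemma wt_del (u : ℤ × ℤ) : ggWt w u (u.1 + 1, u.2 - 1) = 1 := by
  rw [ggWt, if_neg]; simp only [Prod.mk.injEq]; omega

lemma wt_ins (u : ℤ × ℤ) : ggWt w u (u.1, u.2 + 1) = 1 := by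
  rw [ggWt, if_neg]; simp only [Prod.mk.injEq]; omega

lemma wt_ver (u : ℤ × ℤ) : ggWt w u (u.1 + 1, u.2) = w (u.1 + 1) u.2 := by
  rw [ggWt, if_pos rfl]

lemma exists_path_aux : ∀ n : ℕ, ∀ v : ℤ × ℤ, (v.1 + max v.2 0).toNat ≤ n →
    Reachable N t v → ∃ l, IsPath (ggEdge N t) ((0 : ℤ), (0 : ℤ)) v l := by
  intro n
  induction n with
  | zero =>
    intro v hm hr
    obtain ⟨⟨h1, h2, h3, h4⟩, h5⟩ := hr
    have hv : v = ((0 : ℤ), (0 : ℤ)) := by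
      obtain ⟨a, b⟩ := v; simp only [Prod.fst, Prod.snd] at *
      simp only [Prod.mk.injEq]; omega
    exact ⟨[v], by simp [IsPath, hv, List.Chain']⟩
  | succ n ih =>
    intro v hm hr
    obtain ⟨⟨h1, h2, h3, h4⟩, h5⟩ := hr
    by_cases hv : v = ((0 : ℤ), (0 : ℤ))
    · exact ⟨[v], by simp [IsPath, hv, List.Chain']⟩
    · obtain ⟨a, b⟩ := v
      simp only [Prod.fst, Prod.snd] at *
      have hab : ¬(a = 0 ∧ b = 0) := by simpa [Prod.ext_iff] using hv
      by_cases hb : 0 < b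
      · -- insertion from (a, b-1)
        have hru : Reachable N t (a, b - 1) := ⟨⟨h1, h2, by omega, by omega⟩, by omega⟩
        obtain ⟨l, hl⟩ := ih (a, b - 1) (by simp; omega) hru
        refine ⟨l ++ [(a, b)], ?_⟩
        have he : ggEdge N t (a, b - 1) (a, b) :=
          ⟨hru.1, ⟨h1, h2, h3, h4⟩, Or.inr (Or.inl (by simp))⟩
        exact isPath_snoc hl he
      · have ha : 0 < a := by omega
        by_cases hs : 0 < a + b
        · -- vertical from (a-1, b)
          have hru : Reachable N t (a - 1, b) := ⟨⟨by omega, by omega, h3, h4⟩, by omega⟩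
          obtain ⟨l, hl⟩ := ih (a - 1, b) (by simp; omega) hru
          refine ⟨l ++ [(a, b)], ?_⟩
          have he : ggEdge N t (a - 1, b) (a, b) :=
            ⟨hru.1, ⟨h1, h2, h3, h4⟩, Or.inr (Or.inr (by simp))⟩
          exact isPath_snoc hl he
        · -- deletion from (a-1, b+1)
          have hru : Reachable N t (a - 1, b + 1) := ⟨⟨by omega, by omega, by omega, by omega⟩, by omega⟩
          obtain ⟨l, hl⟩ := ih (a - 1, b + 1) (by simp; omega) hru
          refine ⟨l ++ [(a, b)], ?_⟩
          have he : ggEdge N t (a - 1, b + 1) (a, b) :=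
            ⟨hru.1, ⟨h1, h2, h3, h4⟩, Or.inl (by simp)⟩
          exact isPath_snoc hl he

lemma exists_path {v : ℤ × ℤ} (hr : Reachable N t v) :
    ∃ l, IsPath (ggEdge N t) ((0 : ℤ), (0 : ℤ)) v l :=
  exists_path_aux _ v le_rfl hr

lemma cost_zero : ggCost N t w ((0 : ℤ), (0 : ℤ)) = 0 :=
  Nat.le_zero.mp (cost_le_path (l := [((0 : ℤ), (0 : ℤ))]) (by simp [IsPath, List.Chain']))

lemma reachable_zero (N t : ℕ) : Reachable N t ((0 : ℤ), (0 : ℤ)) := by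
  refine ⟨⟨le_refl 0, ?_, ?_, ?_⟩, by simp⟩ <;> simp

lemma cost_ge_diag {v : ℤ × ℤ} (hr : Reachable N t v) : v.2.toNat ≤ ggCost N t w v := by
  refine cost_lower (fun v => v.2.toNat) (Reachable N t) (by simp) (reachable_zero N t)
    (fun u v hu he => reachable_of_edge he hu) ?_ v (exists_path hr)
  rintro u v hu ⟨_, _, h | h | h⟩ <;> subst h
  · rw [wt_del]; simp only [Prod.snd]; omega
  · rw [wt_ins]; simp only [Prod.snd]; omega
  · rw [wt_ver]; simp only [Prod.snd]; omega

lemma cost_ins_le {x e : ℤ} (hr : Reachable N t (x, e)) (he : e + 1 ≤ t) :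
    ggCost N t w (x, e + 1) ≤ ggCost N t w (x, e) + 1 := by
  obtain ⟨⟨h1, h2, h3, h4⟩, h5⟩ := hr
  have he' : ggEdge N t (x, e) (x, e + 1) :=
    ⟨⟨h1, h2, h3, h4⟩, ⟨h1, h2, by omega, he⟩, Or.inr (Or.inl rfl)⟩
  have := cost_le_of_edge (wt := ggWt w) (exists_path ⟨⟨h1, h2, h3, h4⟩, h5⟩) he'
  rwa [wt_ins (x, e)] at this

lemma cost_ver_le (hw1 : ∀ i d, w i d ≤ 1) {x e : ℤ} (hr : Reachable N t (x, e))
    (hx : x + 1 ≤ N) : ggCost N t w (x + 1, e) ≤ ggCost N t w (x, e) + 1 := by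
  obtain ⟨⟨h1, h2, h3, h4⟩, h5⟩ := hr
  have he' : ggEdge N t (x, e) (x + 1, e) :=
    ⟨⟨h1, h2, h3, h4⟩, ⟨by omega, hx, h3, h4⟩, Or.inr (Or.inr rfl)⟩
  have := cost_le_of_edge (wt := ggWt w) (exists_path ⟨⟨h1, h2, h3, h4⟩, h5⟩) he'
  rw [wt_ver (x, e)] at this
  have h6 : ggCost N t w (x + 1, e) ≤ ggCost N t w (x, e) + w (x + 1) e := this
  have h7 := hw1 (x + 1) e
  omega

lemma cost_del_le {x e : ℤ} (hr : Reachable N t (x, e)) (hx : x + 1 ≤ N)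
    (he : -(t : ℤ) ≤ e - 1) : ggCost N t w (x + 1, e - 1) ≤ ggCost N t w (x, e) + 1 := by
  obtain ⟨⟨h1, h2, h3, h4⟩, h5⟩ := hr
  have he' : ggEdge N t (x, e) (x + 1, e - 1) :=
    ⟨⟨h1, h2, h3, h4⟩, ⟨by omega, hx, he, by omega⟩, Or.inl rfl⟩
  have := cost_le_of_edge (wt := ggWt w) (exists_path ⟨⟨h1, h2, h3, h4⟩, h5⟩) he'
  rwa [wt_del (x, e)] at this

lemma cost_ins_chain {x e : ℤ} (hr : Reachable N t (x, e)) :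
    ∀ k : ℕ, e + k ≤ t → ggCost N t w (x, e + k) ≤ ggCost N t w (x, e) + k := by
  intro k
  induction k with
  | zero => simp
  | succ k ih =>
    intro hk
    push_cast at hk ⊢
    have hk' : e + k ≤ t := by omega
    have h1 := ih (by push_cast; omega)
    have hr' : Reachable N t (x, e + k) := by
      obtain ⟨⟨a1, a2, a3, a4⟩, a5⟩ := hr
      exact ⟨⟨a1, a2, by simp only [Prod.snd]; omega, by simpa using hk'⟩,
        by simp only [Prod.fst, Prod.snd]; omega⟩
    have h2 := cost_ins_le (w := w) hr' (by omega)
    have hcast : e + ((k : ℤ) + 1) = (e + k) + 1 := by ring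
    rw [hcast]
    push_cast at h1
    omega

end Grid

section Key
variable {N t : ℕ} {w : ℤ → ℤ → ℕ}

lemma wt_del' (a b : ℤ) : ggWt w (a, b) (a + 1, b - 1) = 1 := wt_del (a, b)
lemma wt_ins' (a b : ℤ) : ggWt w (a, b) (a, b + 1) = 1 := wt_ins (a, b)
lemma wt_ver' (a b : ℤ) : ggWt w (a, b) (a + 1, b) = w (a + 1) b := wt_ver (a, b)

/-- downward chain along a row, given the `b`-statement for that row -/
lemma cost_down_chain {j : ℤ}
    (hb : ∀ d, Reachable N t (j, d) → ggVertex N t (j, d + 1) →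
      ggCost N t w (j, d) ≤ ggCost N t w (j, d + 1) + 1) :
    ∀ k : ℕ, ∀ e : ℤ, Reachable N t (j, e) → ggVertex N t (j, e + k) →
      ggCost N t w (j, e) ≤ ggCost N t w (j, e + k) + k := by
  intro k
  induction k with
  | zero => intro e hr _; simp
  | succ k ih =>
    intro e hr hvk
    obtain ⟨⟨a1, a2, a3, a4⟩, a5⟩ := hr
    simp only [Prod.fst, Prod.snd] at a1 a2 a3 a4 a5
    obtain ⟨b1, b2, b3, b4⟩ := hvk
    simp only [Prod.fst, Prod.snd] at b3 b4
    have h1 : ggCost N t w (j, e) ≤ ggCost N t w (j, e + 1) + 1 := by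
      refine hb e ⟨⟨a1, a2, a3, a4⟩, a5⟩ ⟨a1, a2, ?_, ?_⟩ <;>
        simp only [Prod.fst, Prod.snd] <;> push_cast at b4 <;> omega
    have h2 : ggCost N t w (j, e + 1) ≤ ggCost N t w (j, (e + 1) + k) + k := by
      refine ih (e + 1) ⟨⟨a1, a2, ?_, ?_⟩, ?_⟩ ⟨a1, a2, ?_, ?_⟩ <;>
        simp only [Prod.fst, Prod.snd] <;> push_cast at b4 ⊢ <;> omega
    have hcast : (e + 1) + (k : ℤ) = e + ((k : ℕ) + 1 : ℕ) := by push_cast; ring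
    rw [hcast] at h2
    omega

noncomputable def gFun (N t : ℕ) (w : ℤ → ℤ → ℕ) (j e : ℤ) : ℕ :=
  sInf {m | ∃ e', Reachable N t (j, e') ∧ ggCost N t w (j, e') + (e - e').natAbs = m}

lemma gFun_le {j e e' : ℤ} (h : Reachable N t (j, e')) :
    gFun N t w j e ≤ ggCost N t w (j, e') + (e - e').natAbs := Nat.sInf_le ⟨e', h, rfl⟩

lemma gFun_mem {j e₀ : ℤ} (hne : Reachable N t (j, e₀)) (e : ℤ) :
    ∃ e', Reachable N t (j, e') ∧ ggCost N t w (j, e') + (e - e').natAbs = gFun N t w j e := by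
  have hne' : {m | ∃ e', Reachable N t (j, e') ∧ ggCost N t w (j, e') + (e - e').natAbs = m}.Nonempty :=
    ⟨_, e₀, hne, rfl⟩
  exact Nat.sInf_mem hne'

lemma gFun_step {j e₀ e f : ℤ} (hne : Reachable N t (j, e₀)) (h : (e - f).natAbs ≤ 1) :
    gFun N t w j f ≤ gFun N t w j e + 1 := by
  obtain ⟨e', he', heq⟩ := gFun_mem (w := w) hne e
  have h2 := gFun_le (w := w) (e := f) he'
  omega

lemma keyA (hw1 : ∀ i d, w i d ≤ 1) {j : ℤ} (hj : 0 ≤ j)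
    (hb : ∀ d, Reachable N t (j, d) → ggVertex N t (j, d + 1) →
      ggCost N t w (j, d) ≤ ggCost N t w (j, d + 1) + 1)
    (d₀ : ℤ) (hr : Reachable N t (j, d₀)) (hv : ggVertex N t (j + 1, d₀)) :
    ggCost N t w (j, d₀) ≤ ggCost N t w (j + 1, d₀) := by
  have hrv : Reachable N t (j + 1, d₀) := by
    obtain ⟨_, h5⟩ := hr
    exact ⟨hv, by simp only [Prod.fst, Prod.snd] at *; omega⟩
  have hlow : (fun v : ℤ × ℤ => if v.1 ≤ j then ggCost N t w v else gFun N t w j v.2)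
      (j + 1, d₀) ≤ cost (ggEdge N t) (ggWt w) (0, 0) (j + 1, d₀) := by
    refine cost_lower (E := ggEdge N t) (wt := ggWt w) (s := ((0, 0) : ℤ × ℤ))
      (fun v : ℤ × ℤ => if v.1 ≤ j then ggCost N t w v else gFun N t w j v.2)
      (Reachable N t) ?_ (reachable_zero N t)
      (fun u v hu he => reachable_of_edge he hu) ?_ _ (exists_path hrv)
    · simp only [Prod.fst]
      rw [if_pos hj]
      exact cost_zero
    · rintro ⟨a, b⟩ v hu ⟨huv, hvv, hcase⟩
      have hedge : ggEdge N t (a, b) v := ⟨huv, hvv, hcase⟩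
      rcases hcase with h | h | h <;> subst h <;>
        simp only [Prod.fst, Prod.snd] at *
      · -- deletion
        rw [wt_del']
        by_cases h1 : a + 1 ≤ j
        · rw [if_pos h1, if_pos (by omega)]
          have := cost_le_of_edge (wt := ggWt w) (exists_path hu) hedge
          rw [wt_del'] at this
          exact this
        · rw [if_neg h1]
          by_cases h2 : a ≤ j
          · rw [if_pos h2]
            have haj : a = j := by omega
            subst haj
            have := gFun_le (w := w) (e := b - 1) hu
            have hab : (b - 1 - b).natAbs = 1 := by omega
            omega
          · rw [if_neg h2]
            exact gFun_step hr (by omega)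
      · -- insertion
        rw [wt_ins']
        by_cases h1 : a ≤ j
        · rw [if_pos h1, if_pos h1]
          have := cost_le_of_edge (wt := ggWt w) (exists_path hu) hedge
          rw [wt_ins'] at this
          exact this
        · rw [if_neg h1, if_neg h1]
          exact gFun_step hr (by omega)
      · -- vertical
        rw [wt_ver']
        by_cases h1 : a + 1 ≤ j
        · rw [if_pos h1, if_pos (by omega)]
          have := cost_le_of_edge (wt := ggWt w) (exists_path hu) hedge
          rw [wt_ver'] at this
          exact this
        · rw [if_neg h1]
          by_cases h2 : a ≤ j
          · rw [if_pos h2]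
            have haj : a = j := by omega
            subst haj
            have := gFun_le (w := w) (e := b) hu
            have hab : (b - b).natAbs = 0 := by omega
            omega
          · rw [if_neg h2]
            exact Nat.le_add_right _ _
  simp only [Prod.fst, Prod.snd] at hlow
  rw [if_neg (by omega)] at hlow
  have hmain : ggCost N t w (j, d₀) ≤ gFun N t w j d₀ := by
    obtain ⟨e', he', heq⟩ := gFun_mem (w := w) hr d₀
    obtain ⟨⟨c1, c2, c3, c4⟩, c5⟩ := he'
    simp only [Prod.fst, Prod.snd] at c1 c2 c3 c4 c5
    obtain ⟨b1, b2, b3, b4⟩ := hv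
    simp only [Prod.fst, Prod.snd] at b1 b2 b3 b4
    by_cases hcase : e' ≤ d₀
    · have := cost_ins_chain (w := w) ⟨⟨c1, c2, c3, c4⟩, c5⟩ ((d₀ - e').toNat)
        (by push_cast; omega)
      have hcast : e' + ((d₀ - e').toNat : ℤ) = d₀ := by omega
      rw [hcast] at this
      omega
    · have := cost_down_chain hb ((e' - d₀).toNat) d₀ hr ?_
      · have hcast : d₀ + ((e' - d₀).toNat : ℤ) = e' := by omega
        rw [hcast] at this
        omega
      · refine ⟨c1, c2, ?_, ?_⟩ <;> simp only [Prod.fst, Prod.snd] <;> omega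
  exact hmain.trans hlow

lemma keyB0 : ∀ d : ℤ, Reachable N t ((0 : ℤ), d) → ggVertex N t ((0 : ℤ), d + 1) →
    ggCost N t w ((0 : ℤ), d) ≤ ggCost N t w ((0 : ℤ), d + 1) + 1 := by
  intro d hr hv
  obtain ⟨⟨a1, a2, a3, a4⟩, a5⟩ := hr
  simp only [Prod.fst, Prod.snd] at a1 a2 a3 a4 a5
  obtain ⟨b1, b2, b3, b4⟩ := hv
  simp only [Prod.fst, Prod.snd] at b3 b4
  have h1 := cost_ins_chain (w := w) (reachable_zero N t) d.toNat (by push_cast; omega)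
  have hcast : (0 : ℤ) + (d.toNat : ℤ) = d := by omega
  rw [hcast, cost_zero] at h1
  have h2 : ((0 : ℤ), d + 1).2.toNat ≤ ggCost N t w ((0 : ℤ), d + 1) :=
    cost_ge_diag ⟨⟨a1, a2, by simp only [Prod.fst, Prod.snd]; omega,
      by simp only [Prod.fst, Prod.snd]; omega⟩, by simp only [Prod.fst, Prod.snd]; omega⟩
  simp only [Prod.snd] at h2
  omega

lemma key (hw1 : ∀ i d, w i d ≤ 1) : ∀ n : ℕ,
    (∀ d, Reachable N t ((n : ℤ), d) → ggVertex N t ((n : ℤ), d + 1) →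
      ggCost N t w ((n : ℤ), d) ≤ ggCost N t w ((n : ℤ), d + 1) + 1) ∧
    (∀ d, Reachable N t ((n : ℤ), d) → ggVertex N t ((n : ℤ) + 1, d) →
      ggCost N t w ((n : ℤ), d) ≤ ggCost N t w ((n : ℤ) + 1, d)) := by
  intro n
  induction n with
  | zero =>
    refine ⟨keyB0, ?_⟩
    exact fun d hr hv => keyA hw1 le_rfl keyB0 d hr hv
  | succ n ih =>
    have hB : ∀ d, Reachable N t ((n : ℤ) + 1, d) → ggVertex N t ((n : ℤ) + 1, d + 1) →
        ggCost N t w ((n : ℤ) + 1, d) ≤ ggCost N t w ((n : ℤ) + 1, d + 1) + 1 := by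
      intro d hr hv
      obtain ⟨⟨a1, a2, a3, a4⟩, a5⟩ := hr
      simp only [Prod.fst, Prod.snd] at a1 a2 a3 a4 a5
      obtain ⟨b1, b2, b3, b4⟩ := hv
      simp only [Prod.fst, Prod.snd] at b1 b2 b3 b4
      have hrn : Reachable N t ((n : ℤ), d + 1) :=
        ⟨⟨by simp only [Prod.fst, Prod.snd]; omega, by simp only [Prod.fst, Prod.snd]; omega,
          by simp only [Prod.fst, Prod.snd]; omega, by simp only [Prod.fst, Prod.snd]; omega⟩,
          by simp only [Prod.fst, Prod.snd]; omega⟩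
      have h1 : ggCost N t w ((n : ℤ) + 1, (d + 1) - 1) ≤ ggCost N t w ((n : ℤ), d + 1) + 1 :=
        cost_del_le hrn (by omega) (by omega)
      have h2 : ggCost N t w ((n : ℤ), d + 1) ≤ ggCost N t w ((n : ℤ) + 1, d + 1) :=
        ih.2 (d + 1) hrn ⟨b1, b2, b3, b4⟩
      have hcast : (d + 1) - 1 = d := by ring
      rw [hcast] at h1
      omega
    refine ⟨?_, ?_⟩
    · intro d hr hv
      have := hB d ?_ ?_ <;> [skip; skip; skip] <;> push_cast at * <;> first | exact this | exact hr | exact hv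
    · intro d hr hv
      have := keyA hw1 (by positivity) hB d ?_ ?_
      · push_cast at this ⊢; exact this
      · push_cast at hr ⊢; exact hr
      · push_cast at hv ⊢; exact hv

end Key

theorem stmt1 (N t : ℕ) (w : ℤ → ℤ → ℕ)
    (hw1 : ∀ i d, w i d ≤ 1)
    (hw0 : ∀ i d : ℤ, ¬(1 ≤ i ∧ i ≤ (N : ℤ) ∧ -(t : ℤ) ≤ d ∧ d ≤ (t : ℤ)) → w i d = 0)
    (i d : ℤ) (hv : ggVertex N t (i, d)) :
    (Reachable N t (i - 1, d) →
      ggCost N t w (i - 1, d) ≤ ggCost N t w (i, d) ∧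
      ggCost N t w (i, d) ≤ ggCost N t w (i - 1, d) + 1) ∧
    (Reachable N t (i, d - 1) →
      ggCost N t w (i, d - 1) ≤ ggCost N t w (i, d) + 1 ∧
      ggCost N t w (i, d) ≤ ggCost N t w (i, d - 1) + 1) ∧
    (Reachable N t (i - 1, d + 1) →
      ggCost N t w (i - 1, d + 1) ≤ ggCost N t w (i, d) + 1 ∧
      ggCost N t w (i, d) ≤ ggCost N t w (i - 1, d + 1) + 1) := by
  have hv' := hv
  obtain ⟨v1, v2, v3, v4⟩ := hv'
  simp only [Prod.fst, Prod.snd] at v1 v2 v3 v4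
  refine ⟨?_, ?_, ?_⟩
  · intro hr
    have hr' := hr
    obtain ⟨⟨r1, r2, r3, r4⟩, r5⟩ := hr'
    simp only [Prod.fst, Prod.snd] at r1 r2 r3 r4 r5
    obtain ⟨n, hn⟩ : ∃ n : ℕ, (n : ℤ) = i - 1 := ⟨(i - 1).toNat, by omega⟩
    constructor
    · have hi : i = (n : ℤ) + 1 := by omega
      rw [← hn] at hr ⊢
      rw [hi] at hv ⊢
      exact (key (N := N) (t := t) hw1 n).2 d hr hv
    · have h := cost_ver_le (w := w) hw1 (x := i - 1) (e := d) hr (by omega)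
      have hc : i - 1 + 1 = i := by ring
      rw [hc] at h
      exact h
  · intro hr
    constructor
    · obtain ⟨n, hn⟩ : ∃ n : ℕ, (n : ℤ) = i := ⟨i.toNat, by omega⟩
      have h := (key (N := N) (t := t) hw1 n).1 (d - 1)
      rw [hn] at h
      have hc : d - 1 + 1 = d := by ring
      rw [hc] at h
      exact h hr hv
    · have h := cost_ins_le (w := w) (x := i) (e := d - 1) hr (by omega)
      have hc : d - 1 + 1 = d := by ring
      rw [hc] at h
      exact h
  · intro hr
    have hr' := hr
    obtain ⟨⟨r1, r2, r3, r4⟩, r5⟩ := hr'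
    simp only [Prod.fst, Prod.snd] at r1 r2 r3 r4 r5
    constructor
    · obtain ⟨n, hn⟩ : ∃ n : ℕ, (n : ℤ) = i - 1 := ⟨(i - 1).toNat, by omega⟩
      have hvy : ggVertex N t (i, d + 1) := by
        refine ⟨?_, ?_, ?_, ?_⟩ <;> simp only [Prod.fst, Prod.snd] <;> omega
      have h1 : ggCost N t w (i - 1, d + 1) ≤ ggCost N t w (i, d + 1) := by
        have hi : i = (n : ℤ) + 1 := by omega
        rw [← hn] at hr ⊢
        rw [hi] at hvy ⊢
        exact (key (N := N) (t := t) hw1 n).2 (d + 1) hr hvy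
      have h2 : ggCost N t w (i, d + 1) ≤ ggCost N t w (i, d) + 1 := by
        refine cost_ins_le (w := w) (x := i) (e := d) ⟨hv, ?_⟩ (by omega)
        simp only [Prod.fst, Prod.snd]; omega
      omega
    · have h := cost_del_le (w := w) (x := i - 1) (e := d + 1) hr (by omega) (by omega)
      have hc1 : i - 1 + 1 = i := by ring
      have hc2 : d + 1 - 1 = d := by ring
      rw [hc1, hc2] at h
      exact h

end Stmt1
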